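/- Let S be an evolution process on a metric space X. Suppose there exists τ > 0 such that S(t, t−τ) is a compact map for each t, and there exists a backwards bounded pullback absorbing family B̂ = {B_t}. Then the family Ĉ defined by C_t = ⋃_{s ≤ s₀(t)} S(t,s) B_s (for suitable s₀(t)) is positively invariant, backwards bounded, and pullback absorbing, and the family M̂ with M_t = closure of S(t, t−τ) C_{t−τ} is compact, positively invariant, and pullback absorbing; hence for every decay function φ, M̂ is a generalized φ-pullback attractor for S. -/

import Mathlib

open Filter Set

variable {X : Type*} [MetricSpace X]

/-- An evolution process on a metric space `X`, with continuous time. -/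
def IsEvolutionProcess (S : ℝ → ℝ → X → X) : Prop :=
  (∀ t x, S t t x = x) ∧
  (∀ t r s, s ≤ r → r ≤ t → ∀ x, S t r (S r s x) = S t s x) ∧
  ContinuousOn (fun p : (ℝ × ℝ) × X => S p.1.1 p.1.2 p.2)
    {p : (ℝ × ℝ) × X | p.1.2 ≤ p.1.1}

/-- A family is positively invariant for `S`. -/
def PositivelyInvariant (S : ℝ → ℝ → X → X) (B : ℝ → Set X) : Prop :=
  ∀ t s, s ≤ t → S t s '' B s ⊆ B t

/-- A family is backwards bounded. -/
def BackwardsBounded (B : ℝ → Set X) : Prop :=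
  ∀ t : ℝ, Bornology.IsBounded (⋃ s ∈ Iic t, B s)

/-- A family is pullback absorbing for `S`. -/
def PullbackAbsorbing (S : ℝ → ℝ → X → X) (B : ℝ → Set X) : Prop :=
  ∀ D : Set X, Bornology.IsBounded D → ∀ t : ℝ,
    ∃ s₀ ≤ t, ∀ s ≤ s₀, S t s '' D ⊆ B t

/-- A decay function `φ : [k,∞) → [0,∞)`. -/
def IsDecayFunction (φ : ℝ → ℝ) (k : ℝ) : Prop :=
  0 ≤ k ∧ (∀ t ∈ Ici k, 0 ≤ φ t) ∧ AntitoneOn φ (Ici k) ∧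
    Tendsto φ atTop (nhds 0) ∧
    ∀ ω > (0 : ℝ), ∀ η : ℝ, ∃ c : ℝ, ∀ᶠ t in atTop, φ (ω * t + η) / φ (ω * t) ≤ c

/-- `M` is a generalized `φ`-pullback attractor for `S`: compact, positively invariant and
`φ`-pullback attracting (attraction phrased via `Metric.infDist`, i.e. the Hausdorff
semidistance `d_H(S(t,t-τ)D, M_t) ≤ C φ(ωτ)`). -/
def GeneralizedPullbackAttractor (S : ℝ → ℝ → X → X) (φ : ℝ → ℝ) (M : ℝ → Set X) : Prop :=
  (∀ t, IsCompact (M t)) ∧ PositivelyInvariant S M ∧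
    ∃ ω > (0 : ℝ), ∀ D : Set X, Bornology.IsBounded D → ∀ t : ℝ,
      ∃ C ≥ (0 : ℝ), ∃ τ₀ ≥ (0 : ℝ), ∀ τ ≥ τ₀, ∀ x ∈ D,
        Metric.infDist (S t (t - τ) x) (M t) ≤ C * φ (ω * τ)

theorem eventually_compact_process_has_generalized_attractor
    (S : ℝ → ℝ → X → X) (hS : IsEvolutionProcess S)
    (τ : ℝ) (hτ : 0 < τ)
    (hcpt : ∀ t : ℝ, ∀ D : Set X, Bornology.IsBounded D →
      IsCompact (closure (S t (t - τ) '' D)))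
    (B : ℝ → Set X) (hBbb : BackwardsBounded B) (hBabs : PullbackAbsorbing S B) :
    ∃ s₀ : ℝ → ℝ, (∀ t, s₀ t ≤ t) ∧
      ∃ C : ℝ → Set X,
        (C = fun t => ⋃ s ∈ Iic (s₀ t), S t s '' B s) ∧
        PositivelyInvariant S C ∧ BackwardsBounded C ∧ PullbackAbsorbing S C ∧
        ∃ M : ℝ → Set X,
          (M = fun t => closure (S t (t - τ) '' C (t - τ))) ∧
          (∀ t, IsCompact (M t)) ∧ PositivelyInvariant S M ∧ PullbackAbsorbing S M ∧
          ∀ (φ : ℝ → ℝ) (k : ℝ), IsDecayFunction φ k →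
            GeneralizedPullbackAttractor S φ M := by
  obtain ⟨hid, hco, hcont⟩ := hS
  -- pointwise continuity of `S t s` for `s ≤ t`
  have hScont : ∀ {s t : ℝ}, s ≤ t → Continuous (fun x : X => S t s x) := by
    intro s t hst
    have hmap : Continuous (fun x : X => (((t, s), x) : (ℝ × ℝ) × X)) := by continuity
    exact hcont.comp_continuous hmap (fun x => hst)
  have hKcl : ∀ (s t : ℝ), s ≤ t → ∀ A : Set X,
      S t s '' closure A ⊆ closure (S t s '' A) :=
    fun s t hst A => image_closure_subset_closure_image (hScont hst)
  -- joint continuity of `(u, x) ↦ S u p x` on `{u ≥ p}`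
  have hGcont : ∀ p : ℝ, ContinuousOn (fun q : ℝ × X => S q.1 p q.2)
      {q : ℝ × X | p ≤ q.1} := by
    intro p
    have he : Continuous (fun q : ℝ × X => (((q.1, p), q.2) : (ℝ × ℝ) × X)) := by continuity
    exact hcont.comp he.continuousOn (fun q hq => hq)
  have hGcpt : ∀ (p b : ℝ) (K : Set X), IsCompact K →
      IsCompact ((fun q : ℝ × X => S q.1 p q.2) '' (Icc p b ×ˢ K)) := by
    intro p b K hK
    exact (isCompact_Icc.prod hK).image_of_continuousOn
      ((hGcont p).mono (fun q hq => hq.1.1))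
  -- the backwards unions and the absorption-depth function θ
  have hDbdd : ∀ t : ℝ, Bornology.IsBounded (⋃ s ∈ Iic t, B s) := hBbb
  have hBsub : ∀ s t : ℝ, s ≤ t → B s ⊆ ⋃ r ∈ Iic t, B r :=
    fun s t hst => subset_biUnion_of_mem (mem_Iic.mpr hst)
  have hθex : ∀ t : ℝ, ∃ θ, θ ≤ t ∧ ∀ s ≤ θ, S t s '' (⋃ r ∈ Iic t, B r) ⊆ B t := by
    intro t
    obtain ⟨θ, h1, h2⟩ := hBabs _ (hDbdd t) t
    exact ⟨θ, h1, h2⟩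
  choose θ hθle hθabs using hθex
  -- the basic family R
  set R : ℝ → ℝ → Set X := fun u σ => ⋃ s ∈ Iic σ, S u s '' B s with hRdef
  have hRmono : ∀ (u : ℝ) {σ' σ : ℝ}, σ' ≤ σ → R u σ' ⊆ R u σ := by
    intro u σ' σ h
    exact biUnion_subset_biUnion_left (Iic_subset_Iic.mpr h)
  have hRB : ∀ u σ : ℝ, σ ≤ θ u → R u σ ⊆ B u := by
    intro u σ hσ x hx
    simp only [hRdef, mem_iUnion, mem_Iic, mem_image] at hx
    obtain ⟨s, hs, b, hb, rfl⟩ := hx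
    exact hθabs u s (hs.trans hσ) ⟨b, hBsub s u ((hs.trans hσ).trans (hθle u)) hb, rfl⟩
  have hRfac : ∀ (p u σ : ℝ), σ ≤ p - τ → p ≤ u →
      R u σ ⊆ S u p '' (S p (p - τ) '' R (p - τ) σ) := by
    intro p u σ h1 h2 x hx
    simp only [hRdef, mem_iUnion, mem_Iic, mem_image] at hx
    obtain ⟨s, hs, b, hb, rfl⟩ := hx
    have hsp : s ≤ p - τ := hs.trans h1
    have hy : S (p - τ) s b ∈ R (p - τ) σ := by
      simp only [hRdef, mem_iUnion, mem_Iic, mem_image]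
      exact ⟨s, hs, b, hb, rfl⟩
    refine ⟨S p (p - τ) (S (p - τ) s b), ⟨S (p - τ) s b, hy, rfl⟩, ?_⟩
    rw [hco p (p - τ) s hsp (by linarith), hco u p s (by linarith) h2]
  have hRfac' : ∀ (p u σ : ℝ), σ ≤ p - τ → p ≤ u →
      S u p '' (S p (p - τ) '' R (p - τ) σ) ⊆ R u σ := by
    intro p u σ h1 h2 y hy
    obtain ⟨z, hz, rfl⟩ := hy
    obtain ⟨w, hw, rfl⟩ := hz
    simp only [hRdef, mem_iUnion, mem_Iic, mem_image] at hw ⊢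
    obtain ⟨s, hs, b, hb, rfl⟩ := hw
    refine ⟨s, hs, b, hb, ?_⟩
    rw [hco p (p - τ) s (hs.trans h1) (by linarith), hco u p s (by linarith) h2]
  have hKcpt : ∀ (p σ : ℝ), σ ≤ θ (p - τ) →
      IsCompact (closure (S p (p - τ) '' R (p - τ) σ)) := by
    intro p σ h
    exact hcpt p _ ((hDbdd (p - τ)).subset ((hRB _ _ h).trans (hBsub (p - τ) (p - τ) le_rfl)))
  -- the fixed bounded open set E
  set E : Set X := Metric.thickening 1 (⋃ s ∈ Iic (0 : ℝ), B s) with hEdef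
  have hEopen : IsOpen E := Metric.isOpen_thickening
  have hEbdd : Bornology.IsBounded E := (hDbdd 0).thickening
  have hclE : ∀ u : ℝ, u ≤ 0 → closure (B u) ⊆ E := by
    intro u hu
    exact (closure_mono (hBsub u 0 hu)).trans (Metric.closure_subset_thickening one_pos _)
  -- the anchors
  set pk : ℕ → ℝ := fun k => -((k : ℝ) + 1) with hpk
  have hpk1 : ∀ k : ℕ, pk k ≤ -1 := by
    intro k
    simp only [hpk]
    have : (0 : ℝ) ≤ (k : ℝ) := Nat.cast_nonneg k
    linarith
  -- existence of good absorption depths for each window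
  have exists_good : ∀ k : ℕ, ∃ σ : ℝ, σ ≤ θ (pk k - τ) ∧ σ ≤ pk k - τ ∧
      (fun q : ℝ × X => S q.1 (pk k) q.2) ''
        (Icc (pk k) (pk k + 1) ×ˢ closure (S (pk k) (pk k - τ) '' R (pk k - τ) σ)) ⊆ E := by
    intro k
    by_contra hcon
    push_neg at hcon
    set p : ℝ := pk k with hp
    have hp0 : p ≤ -1 := hpk1 k
    set c : ℝ := min (θ (p - τ)) (p - τ) with hc
    have hcm1 : ∀ m : ℕ, c - (m : ℝ) ≤ θ (p - τ) :=
      fun m => le_trans (sub_le_self c (Nat.cast_nonneg m)) (min_le_left _ _)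
    have hcm2 : ∀ m : ℕ, c - (m : ℝ) ≤ p - τ :=
      fun m => le_trans (sub_le_self c (Nat.cast_nonneg m)) (min_le_right _ _)
    set Km : ℕ → Set X := fun m => closure (S p (p - τ) '' R (p - τ) (c - (m : ℝ))) with hKm
    have hKmc : ∀ m, IsCompact (Km m) := fun m => hKcpt p _ (hcm1 m)
    have hKmmono : ∀ m m' : ℕ, m ≤ m' → Km m' ⊆ Km m := by
      intro m m' h
      exact closure_mono (image_mono (hRmono _ (by
        have : (m : ℝ) ≤ (m' : ℝ) := Nat.cast_le.mpr h
        linarith)))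
    have hbad : ∀ m : ℕ, ∃ q : ℝ × X, q ∈ Icc p (p + 1) ×ˢ Km m ∧ S q.1 p q.2 ∉ E := by
      intro m
      have hncon := hcon (c - (m : ℝ)) (hcm1 m) (hcm2 m)
      obtain ⟨y, hy, hyE⟩ := Set.not_subset.mp hncon
      obtain ⟨q, hq, rfl⟩ := hy
      exact ⟨q, hq, hyE⟩
    choose qseq hqmem hqE using hbad
    have hq0 : ∀ m, qseq m ∈ Icc p (p + 1) ×ˢ Km 0 := by
      intro m
      obtain ⟨h1, h2⟩ := Set.mem_prod.mp (hqmem m)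
      exact Set.mem_prod.mpr ⟨h1, hKmmono 0 m (Nat.zero_le m) h2⟩
    obtain ⟨q, hqS, ψ, hψ, hψt⟩ := (isCompact_Icc.prod (hKmc 0)).tendsto_subseq hq0
    have hqIcc : q.1 ∈ Icc p (p + 1) := (Set.mem_prod.mp hqS).1
    have hqKm : ∀ m : ℕ, q.2 ∈ Km m := by
      intro m
      have hclosed : IsClosed (Icc p (p + 1) ×ˢ Km m) := isClosed_Icc.prod isClosed_closure
      have hmem : ∀ᶠ j in atTop, (qseq ∘ ψ) j ∈ Icc p (p + 1) ×ˢ Km m := by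
        filter_upwards [eventually_ge_atTop m] with j hj
        obtain ⟨h1, h2⟩ := Set.mem_prod.mp (hqmem (ψ j))
        exact Set.mem_prod.mpr ⟨h1, hKmmono m (ψ j) (le_trans hj (hψ.le_apply)) h2⟩
      exact (Set.mem_prod.mp (hclosed.mem_of_tendsto hψt hmem)).2
    have hGq : Tendsto ((fun q : ℝ × X => S q.1 p q.2) ∘ (qseq ∘ ψ)) atTop
        (nhds (S q.1 p q.2)) := by
      have hcw : ContinuousWithinAt (fun q : ℝ × X => S q.1 p q.2)
          {q : ℝ × X | p ≤ q.1} q := (hGcont p).continuousWithinAt hqIcc.1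
      refine Filter.Tendsto.comp hcw
        (tendsto_nhdsWithin_iff.mpr ⟨hψt, Eventually.of_forall fun j => ?_⟩)
      exact ((Set.mem_prod.mp (hq0 (ψ j))).1).1
    have hnotE : S q.1 p q.2 ∉ E :=
      (hEopen.isClosed_compl).mem_of_tendsto hGq
        (Eventually.of_forall fun j => hqE (ψ j))
    obtain ⟨m, hm⟩ := exists_nat_ge (c - θ q.1)
    have hσθ : c - (m : ℝ) ≤ θ q.1 := by linarith
    have hstep : S q.1 p q.2 ∈ closure (R q.1 (c - (m : ℝ))) := by
      have h1 : S q.1 p q.2 ∈ S q.1 p '' Km m := ⟨q.2, hqKm m, rfl⟩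
      have h3 := hKcl p q.1 hqIcc.1 (S p (p - τ) '' R (p - τ) (c - (m : ℝ)))
      exact closure_mono (hRfac' p q.1 (c - (m : ℝ)) (hcm2 m) hqIcc.1) (h3 h1)
    have hq0' : q.1 ≤ 0 := by
      have := hqIcc.2
      linarith
    exact hnotE (hclE q.1 hq0' (closure_mono (hRB _ _ hσθ) hstep))
  choose pick hpick1 hpick2 hpick3 using exists_good
  -- the monotone sequence of depths
  set σseq : ℕ → ℝ := fun k => Nat.rec (pick 0) (fun k ih => min (pick (k + 1)) ih) k
    with hσseq
  have hσsucc : ∀ k, σseq (k + 1) = min (pick (k + 1)) (σseq k) := fun k => rfl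
  have hσanti : Antitone σseq := antitone_nat_of_succ_le (fun k => by
    rw [hσsucc]; exact min_le_right _ _)
  have hσpick : ∀ k, σseq k ≤ pick k := by
    intro k
    cases k with
    | zero => exact le_rfl
    | succ k => rw [hσsucc]; exact min_le_left _ _
  have hσ1 : ∀ k, σseq k ≤ θ (pk k - τ) := fun k => (hσpick k).trans (hpick1 k)
  have hσ2 : ∀ k, σseq k ≤ pk k - τ := fun k => (hσpick k).trans (hpick2 k)
  have hσE : ∀ k, (fun q : ℝ × X => S q.1 (pk k) q.2) ''
      (Icc (pk k) (pk k + 1) ×ˢ closure (S (pk k) (pk k - τ) '' R (pk k - τ) (σseq k)))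
        ⊆ E := by
    intro k
    refine subset_trans ?_ (hpick3 k)
    exact image_mono (prod_mono_right (closure_mono (image_mono (hRmono _ (hσpick k)))))
  -- the function s₀
  set idx : ℝ → ℕ := fun u => ⌈-1 - u⌉₊ with hidx
  set s₀ : ℝ → ℝ := fun u => σseq (idx u) with hs₀def
  have hpidx : ∀ u : ℝ, pk (idx u) ≤ u := by
    intro u
    have h := Nat.le_ceil (-1 - u)
    simp only [hpk, hidx]
    linarith
  have hs₀le : ∀ t : ℝ, s₀ t ≤ t := by
    intro t
    have h1 : σseq (idx t) ≤ pk (idx t) - τ := hσ2 _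
    have h2 := hpidx t
    simp only [hs₀def]
    linarith
  have hs₀mono : Monotone s₀ := by
    intro u v huv
    simp only [hs₀def, hidx]
    exact hσanti (Nat.ceil_mono (by linarith))
  -- the family C
  set C : ℝ → Set X := fun t => R t (s₀ t) with hCdef
  have hCinv : PositivelyInvariant S C := by
    intro t s hst y hy
    obtain ⟨x, hx, rfl⟩ := hy
    simp only [hCdef, hRdef, mem_iUnion, mem_Iic, mem_image] at hx ⊢
    obtain ⟨r, hr, b, hb, rfl⟩ := hx
    exact ⟨r, hr.trans (hs₀mono hst), b, hb,
      (hco t s r (hr.trans (hs₀le s)) hst b).symm⟩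
  have hCbb : BackwardsBounded C := by
    intro t
    set bb : ℝ := max t (pk 0 + 1) with hbb
    set K0 : Set X := closure (S (pk 0) (pk 0 - τ) '' R (pk 0 - τ) (σseq 0)) with hK0
    have hK0c : IsCompact K0 := hKcpt _ _ (hσ1 0)
    set Gt : Set X := (fun q : ℝ × X => S q.1 (pk 0) q.2) '' (Icc (pk 0) bb ×ˢ K0) with hGt
    have hGtc : IsCompact Gt := hGcpt _ _ _ hK0c
    have hsub : (⋃ u ∈ Iic t, C u) ⊆ E ∪ Gt := by
      intro x hx
      simp only [mem_iUnion, mem_Iic] at hx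
      obtain ⟨u, hut, hxu⟩ := hx
      have hxR : x ∈ R u (σseq (idx u)) := hxu
      by_cases hu : pk 0 ≤ u
      · right
        have hidx0 : idx u = 0 := by
          simp only [hidx]
          rw [Nat.ceil_eq_zero]
          have := hpk1 0
          have h0 : pk 0 = -1 := by simp [hpk]
          rw [h0] at hu
          linarith
        rw [hidx0] at hxR
        obtain ⟨w, hw, rfl⟩ := hRfac (pk 0) u (σseq 0) (hσ2 0) hu hxR
        exact ⟨(u, w), Set.mem_prod.mpr ⟨⟨hu, le_trans hut (le_max_left _ _)⟩,
          subset_closure hw⟩, rfl⟩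
      · left
        have h1 : pk (idx u) ≤ u := hpidx u
        have h2 : u ≤ pk (idx u) + 1 := by
          have h0 : pk 0 = -1 := by simp [hpk]
          rw [h0] at hu
          have hpos : (0 : ℝ) ≤ -1 - u := by linarith [lt_of_not_ge hu]
          have hce := Nat.ceil_lt_add_one hpos
          simp only [hpk, hidx]
          linarith
        obtain ⟨w, hw, rfl⟩ := hRfac (pk (idx u)) u (σseq (idx u)) (hσ2 (idx u)) h1 hxR
        exact hσE (idx u) ⟨(u, w), Set.mem_prod.mpr ⟨⟨h1, h2⟩, subset_closure hw⟩, rfl⟩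
    exact (hEbdd.union hGtc.isBounded).subset hsub
  have hCabs : PullbackAbsorbing S C := by
    intro D hD t
    obtain ⟨σ', hσ't, habs⟩ := hBabs D hD (s₀ t)
    refine ⟨σ', hσ't.trans (hs₀le t), fun s hs => ?_⟩
    rintro y ⟨x, hx, rfl⟩
    have h1 : S (s₀ t) s x ∈ B (s₀ t) := habs s hs ⟨x, hx, rfl⟩
    have h2 : S t (s₀ t) (S (s₀ t) s x) = S t s x :=
      hco t (s₀ t) s (hs.trans hσ't) (hs₀le t) x
    simp only [hCdef, hRdef, mem_iUnion, mem_Iic, mem_image]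
    exact ⟨s₀ t, le_rfl, S (s₀ t) s x, h1, h2⟩
  -- the family M
  set M : ℝ → Set X := fun t => closure (S t (t - τ) '' C (t - τ)) with hMdef
  have hCbdd : ∀ t : ℝ, Bornology.IsBounded (C t) :=
    fun t => (hCbb t).subset (subset_biUnion_of_mem (mem_Iic.mpr le_rfl))
  have hMcpt : ∀ t, IsCompact (M t) := fun t => hcpt t _ (hCbdd (t - τ))
  have hMinv : PositivelyInvariant S M := by
    intro t s hst
    have h1 : S t s '' M s ⊆ closure (S t s '' (S s (s - τ) '' C (s - τ))) :=
      hKcl s t hst _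
    refine h1.trans (closure_mono ?_)
    rintro y ⟨z, ⟨x, hx, rfl⟩, rfl⟩
    have e1 : S t s (S s (s - τ) x) = S t (s - τ) x :=
      hco t s (s - τ) (by linarith) hst x
    have e2 : S t (t - τ) (S (t - τ) (s - τ) x) = S t (s - τ) x :=
      hco t (t - τ) (s - τ) (by linarith) (by linarith) x
    have hmem : S (t - τ) (s - τ) x ∈ C (t - τ) :=
      hCinv (t - τ) (s - τ) (by linarith) ⟨x, hx, rfl⟩
    exact ⟨S (t - τ) (s - τ) x, hmem, by rw [e2, ← e1]⟩
  have hMabs : PullbackAbsorbing S M := by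
    intro D hD t
    obtain ⟨σ', hσ', habs⟩ := hCabs D hD (t - τ)
    refine ⟨σ', by linarith, fun s hs => ?_⟩
    rintro y ⟨x, hx, rfl⟩
    have h1 : S (t - τ) s x ∈ C (t - τ) := habs s hs ⟨x, hx, rfl⟩
    have h2 : S t (t - τ) (S (t - τ) s x) = S t s x :=
      hco t (t - τ) s (hs.trans hσ') (by linarith) x
    exact subset_closure ⟨S (t - τ) s x, h1, h2⟩
  -- assemble
  refine ⟨s₀, hs₀le, C, ?_, hCinv, hCbb, hCabs, M, ?_, hMcpt, hMinv, hMabs, ?_⟩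
  · funext u
    simp only [hCdef, hRdef]
  · rfl
  · intro φ k hφ
    refine ⟨hMcpt, hMinv, 1, one_pos, fun D hD t => ?_⟩
    obtain ⟨s₁, hs₁, habs⟩ := hMabs D hD t
    refine ⟨1, zero_le_one, max (t - s₁) k, le_trans hφ.1 (le_max_right _ _),
      fun τ' hτ' x hx => ?_⟩
    have hmem : S t (t - τ') x ∈ M t := by
      refine habs (t - τ') ?_ ⟨x, hx, rfl⟩
      have := le_max_left (t - s₁) k
      linarith
    rw [Metric.infDist_zero_of_mem hmem]
    have hkτ : k ≤ 1 * τ' := by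
      have := le_max_right (t - s₁) k
      rw [one_mul]
      linarith
    have := hφ.2.1 (1 * τ') (mem_Ici.mpr hkτ)
    linarith
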